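/- There exist an incidence structure S = (P, L, I), a set Q ⊆ P of four points, and a homogeneous realization (p, l) of S with every three of the vectors {p i : i ∈ Q} linearly independent, such that: (1) the pinned realization space consists of exactly two realizations — the set of homogeneous realizations (q, m) of S with q i a nonzero scalar multiple of p i for every i ∈ Q, considered modulo the equivalence identifying (q, m) and (q', m') when q i is a nonzero scalar multiple of q' i for every i ∈ P and m j is a nonzero scalar multiple of m' j for every j ∈ L, has exactly two elements; (2) each of the two realizations is infinitesimally rigid as a pinned realization: every homogeneous infinitesimal flex (p', l') of it with p' i a scalar multiple of the point coordinate vector for each i ∈ Q has p' i a scalar multiple of the point coordinate vector for every i ∈ P and l' j a scalar multiple of the line coordinate vector for every j ∈ L; and (3) the two realizations are not projectively equivalent: there is no A ∈ GL(3, ℝ) carrying each point coordinate vector of one realization to a nonzero scalar multiple of the corresponding point coordinate vector of the other and each line coordinate vector likewise via (Aᵀ)⁻¹. -/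

import Mathlib

open Matrix

/-- A homogeneous realization of the incidence structure with incidence set `I`. -/
def IsHomRealization {P L : Type*} (I : Set (P × L))
    (q : P → Fin 3 → ℝ) (m : L → Fin 3 → ℝ) : Prop :=
  (∀ i, q i ≠ 0) ∧ (∀ j, m j ≠ 0) ∧ ∀ ij ∈ I, q ij.1 ⬝ᵥ m ij.2 = 0

/-- The realization `q` agrees on the pin set `Q` with the reference point
coordinates `p`, up to nonzero scalars. -/
def PinnedAt {P : Type*} (Q : Finset P) (p q : P → Fin 3 → ℝ) : Prop :=
  ∀ i ∈ Q, ∃ c : ℝ, c ≠ 0 ∧ q i = c • p i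

/-- Two realizations represent the same points and lines of the projective plane
(all coordinate vectors agree up to nonzero scalars). -/
def SameProjReal {P L : Type*} (q : P → Fin 3 → ℝ) (m : L → Fin 3 → ℝ)
    (q' : P → Fin 3 → ℝ) (m' : L → Fin 3 → ℝ) : Prop :=
  (∀ i, ∃ c : ℝ, c ≠ 0 ∧ q i = c • q' i) ∧ (∀ j, ∃ c : ℝ, c ≠ 0 ∧ m j = c • m' j)

/-- Infinitesimal rigidity of a pinned homogeneous realization: every homogeneous
infinitesimal flex whose point parts at the pins are scalar multiples of the
point coordinate vectors consists entirely of scalar multiples of the coordinate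
vectors (i.e., is projectively trivial). -/
def PinnedInfRigid {P L : Type*} (I : Set (P × L)) (Q : Finset P)
    (q : P → Fin 3 → ℝ) (m : L → Fin 3 → ℝ) : Prop :=
  ∀ (p' : P → Fin 3 → ℝ) (l' : L → Fin 3 → ℝ),
    (∀ ij ∈ I, q ij.1 ⬝ᵥ l' ij.2 + p' ij.1 ⬝ᵥ m ij.2 = 0) →
    (∀ i ∈ Q, ∃ c : ℝ, p' i = c • q i) →
    (∀ i, ∃ c : ℝ, p' i = c • q i) ∧ (∀ j, ∃ c : ℝ, l' j = c • m j)

def pR : Fin 6 → Fin 3 → ℝ := ![![1,0,0],![0,1,0],![0,0,1],![1,1,1],![1,1,1],![0,1,1]]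
def lR : Fin 4 → Fin 3 → ℝ := ![![1,0,0],![-1,1,0],![0,-1,1],![0,1,-1]]
def q0R : Fin 6 → Fin 3 → ℝ := ![![1,0,0],![0,1,0],![0,0,1],![1,1,1],![0,0,1],![0,0,1]]
def m0R : Fin 4 → Fin 3 → ℝ := ![![1,0,0],![-1,1,0],![0,-1,0],![-1,1,0]]
def IR : Set (Fin 6 × Fin 4) :=
  {(1,0),(2,0),(5,0),(2,1),(3,1),(4,1),(0,2),(4,2),(5,2),(3,3),(4,3),(5,3)}

@[simp] lemma pR0 : pR 0 = ![1,0,0] := rfl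
@[simp] lemma pR1 : pR 1 = ![0,1,0] := rfl
@[simp] lemma pR2 : pR 2 = ![0,0,1] := rfl
@[simp] lemma pR3 : pR 3 = ![1,1,1] := rfl
@[simp] lemma pR4 : pR 4 = ![1,1,1] := rfl
@[simp] lemma pR5 : pR 5 = ![0,1,1] := rfl
@[simp] lemma lR0 : lR 0 = ![1,0,0] := rfl
@[simp] lemma lR1 : lR 1 = ![-1,1,0] := rfl
@[simp] lemma lR2 : lR 2 = ![0,-1,1] := rfl
@[simp] lemma lR3 : lR 3 = ![0,1,-1] := rfl
@[simp] lemma q0R0 : q0R 0 = ![1,0,0] := rfl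
@[simp] lemma q0R1 : q0R 1 = ![0,1,0] := rfl
@[simp] lemma q0R2 : q0R 2 = ![0,0,1] := rfl
@[simp] lemma q0R3 : q0R 3 = ![1,1,1] := rfl
@[simp] lemma q0R4 : q0R 4 = ![0,0,1] := rfl
@[simp] lemma q0R5 : q0R 5 = ![0,0,1] := rfl
@[simp] lemma m0R0 : m0R 0 = ![1,0,0] := rfl
@[simp] lemma m0R1 : m0R 1 = ![-1,1,0] := rfl
@[simp] lemma m0R2 : m0R 2 = ![0,-1,0] := rfl
@[simp] lemma m0R3 : m0R 3 = ![-1,1,0] := rfl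

lemma vec3_ne {v : Fin 3 → ℝ} (h0 : v 0 = 0) (h1 : v 1 = 0) (h2 : v 2 = 0) : v = 0 := by
  funext k; fin_cases k; exacts [h0, h1, h2]

lemma vec3_eq_smul {v w : Fin 3 → ℝ} {c : ℝ} (h0 : v 0 = c * w 0) (h1 : v 1 = c * w 1)
    (h2 : v 2 = c * w 2) : v = c • w := by
  funext k; fin_cases k; exacts [h0, h1, h2]

lemma dp3 (v w : Fin 3 → ℝ) : v ⬝ᵥ w = v 0 * w 0 + v 1 * w 1 + v 2 * w 2 := by
  simp [dotProduct, Fin.sum_univ_three]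

lemma unpin {c : ℝ} {v w q : Fin 3 → ℝ} (hc : c ≠ 0) (hq : q = c • v)
    (h : q ⬝ᵥ w = 0) : v ⬝ᵥ w = 0 := by
  rw [hq, smul_dotProduct, smul_eq_mul, mul_eq_zero] at h
  exact h.resolve_left hc

lemma classify (q : Fin 6 → Fin 3 → ℝ) (m : Fin 4 → Fin 3 → ℝ)
    (hq : ∀ i, q i ≠ 0) (hm : ∀ j, m j ≠ 0)
    (hinc : ∀ ij ∈ IR, q ij.1 ⬝ᵥ m ij.2 = 0)
    (hpin : ∀ i ∈ ({0,1,2,3} : Finset (Fin 6)), ∃ c : ℝ, c ≠ 0 ∧ q i = c • pR i) :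
    SameProjReal q m q0R m0R ∨ SameProjReal q m pR lR := by
  obtain ⟨c1, hc1ne, hc1⟩ := hpin 0 (by decide)
  obtain ⟨c2, hc2ne, hc2⟩ := hpin 1 (by decide)
  obtain ⟨c3, hc3ne, hc3⟩ := hpin 2 (by decide)
  obtain ⟨c4, hc4ne, hc4⟩ := hpin 3 (by decide)
  -- line A = m 0
  have hA1 : m 0 1 = 0 := by
    have h := unpin hc2ne hc2 (hinc (1,0) (by simp [IR]))
    rw [pR1, dp3] at h; simpa using h
  have hA2 : m 0 2 = 0 := by
    have h := unpin hc3ne hc3 (hinc (2,0) (by simp [IR]))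
    rw [pR2, dp3] at h; simpa using h
  have hA0ne : m 0 0 ≠ 0 := fun h => hm 0 (vec3_ne h hA1 hA2)
  -- line C = m 1
  have hC2 : m 1 2 = 0 := by
    have h := unpin hc3ne hc3 (hinc (2,1) (by simp [IR]))
    rw [pR2, dp3] at h; simpa using h
  have hCsum : m 1 0 + m 1 1 + m 1 2 = 0 := by
    have h := unpin hc4ne hc4 (hinc (3,1) (by simp [IR]))
    rw [pR3, dp3] at h; simpa using h
  have hC0ne : m 1 0 ≠ 0 := fun h => hm 1 (vec3_ne h (by linarith) hC2)
  -- X on C : q 4 1 = q 4 0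
  have hXC : q 4 ⬝ᵥ m 1 = 0 := hinc (4,1) (by simp [IR])
  rw [dp3] at hXC
  have h41 : q 4 1 = q 4 0 := by
    have h : m 1 0 * (q 4 0 - q 4 1) = 0 := by
      linear_combination hXC - q 4 1 * hCsum - (q 4 2 - q 4 1) * hC2
    have := (mul_eq_zero.mp h).resolve_left hC0ne
    linarith
  -- Y : q 5 0 = 0
  have hYA : q 5 ⬝ᵥ m 0 = 0 := hinc (5,0) (by simp [IR])
  rw [dp3] at hYA
  have hy0 : q 5 0 = 0 := by
    have h : q 5 0 * m 0 0 = 0 := by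
      linear_combination hYA - q 5 1 * hA1 - q 5 2 * hA2
    exact (mul_eq_zero.mp h).resolve_right hA0ne
  -- line L = m 2
  have hL0 : m 2 0 = 0 := by
    have h := unpin hc1ne hc1 (hinc (0,2) (by simp [IR]))
    rw [pR0, dp3] at h; simpa using h
  have hXL : q 4 ⬝ᵥ m 2 = 0 := hinc (4,2) (by simp [IR])
  rw [dp3] at hXL
  have hLX : q 4 0 * m 2 1 + q 4 2 * m 2 2 = 0 := by
    linear_combination hXL - q 4 0 * hL0 - m 2 1 * h41
  have hYL : q 5 ⬝ᵥ m 2 = 0 := hinc (5,2) (by simp [IR])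
  rw [dp3] at hYL
  have hLY : q 5 1 * m 2 1 + q 5 2 * m 2 2 = 0 := by
    linear_combination hYL - m 2 0 * hy0
  -- collinearity relation
  have hYX : q 5 1 * q 4 2 = q 5 2 * q 4 0 := by
    by_cases hm21 : m 2 1 = 0
    · have hm22ne : m 2 2 ≠ 0 := fun h => hm 2 (vec3_ne hL0 hm21 h)
      have hw0 : q 4 2 = 0 :=
        (mul_eq_zero.mp (by linear_combination hLX - q 4 0 * hm21)).resolve_right hm22ne
      have hy2 : q 5 2 = 0 :=
        (mul_eq_zero.mp (by linear_combination hLY - q 5 1 * hm21)).resolve_right hm22ne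
      linear_combination q 5 1 * hw0 - q 4 0 * hy2
    · have h : m 2 1 * (q 5 1 * q 4 2 - q 5 2 * q 4 0) = 0 := by
        linear_combination q 4 2 * hLY - q 5 2 * hLX
      have := (mul_eq_zero.mp h).resolve_left hm21
      linarith
  -- line N = m 3
  have hNsum : m 3 0 + m 3 1 + m 3 2 = 0 := by
    have h := unpin hc4ne hc4 (hinc (3,3) (by simp [IR]))
    rw [pR3, dp3] at h; simpa using h
  have hXN : q 4 ⬝ᵥ m 3 = 0 := hinc (4,3) (by simp [IR])
  rw [dp3] at hXN
  have hYN : q 5 ⬝ᵥ m 3 = 0 := hinc (5,3) (by simp [IR])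
  rw [dp3] at hYN
  by_cases hcase : q 4 2 = q 4 0
  · -- realization r1
    right
    have hu : q 4 0 ≠ 0 := fun h => hq 4 (vec3_ne h (by linarith) (by linarith))
    have hy12 : q 5 2 = q 5 1 := by
      have h : (q 5 1 - q 5 2) * q 4 0 = 0 := by linear_combination hYX - q 5 1 * hcase
      have := (mul_eq_zero.mp h).resolve_right hu
      linarith
    have hy1ne : q 5 1 ≠ 0 := fun h => hq 5 (vec3_ne hy0 h (by linarith))
    have hmL : m 2 2 = -(m 2 1) := by
      have h : q 4 0 * (m 2 1 + m 2 2) = 0 := by linear_combination hLX - m 2 2 * hcase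
      have := (mul_eq_zero.mp h).resolve_left hu
      linarith
    have hmL1ne : m 2 1 ≠ 0 := fun h => hm 2 (vec3_ne hL0 h (by rw [hmL, h, neg_zero]))
    have hn12 : m 3 2 = -(m 3 1) := by
      have h : q 5 1 * (m 3 1 + m 3 2) = 0 := by
        linear_combination hYN - m 3 0 * hy0 - m 3 2 * hy12
      have := (mul_eq_zero.mp h).resolve_left hy1ne
      linarith
    have hn0 : m 3 0 = 0 := by linarith
    have hn1ne : m 3 1 ≠ 0 := fun h => hm 3 (vec3_ne hn0 h (by rw [hn12, h, neg_zero]))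
    constructor
    · intro i
      have g0 : ∃ c : ℝ, c ≠ 0 ∧ q 0 = c • pR 0 := ⟨c1, hc1ne, hc1⟩
      have g1 : ∃ c : ℝ, c ≠ 0 ∧ q 1 = c • pR 1 := ⟨c2, hc2ne, hc2⟩
      have g2 : ∃ c : ℝ, c ≠ 0 ∧ q 2 = c • pR 2 := ⟨c3, hc3ne, hc3⟩
      have g3 : ∃ c : ℝ, c ≠ 0 ∧ q 3 = c • pR 3 := ⟨c4, hc4ne, hc4⟩
      have g4 : ∃ c : ℝ, c ≠ 0 ∧ q 4 = c • pR 4 :=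
        ⟨q 4 0, hu, vec3_eq_smul (by simp) (by simp [h41]) (by simp [hcase])⟩
      have g5 : ∃ c : ℝ, c ≠ 0 ∧ q 5 = c • pR 5 :=
        ⟨q 5 1, hy1ne, vec3_eq_smul (by simp [hy0]) (by simp) (by simp [hy12])⟩
      fin_cases i; exacts [g0, g1, g2, g3, g4, g5]
    · intro j
      have g0 : ∃ c : ℝ, c ≠ 0 ∧ m 0 = c • lR 0 :=
        ⟨m 0 0, hA0ne, vec3_eq_smul (by simp) (by simp [hA1]) (by simp [hA2])⟩
      have g1 : ∃ c : ℝ, c ≠ 0 ∧ m 1 = c • lR 1 :=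
        ⟨-(m 1 0), neg_ne_zero.mpr hC0ne,
          vec3_eq_smul (by simp) (by simp; linarith) (by simp [hC2])⟩
      have g2 : ∃ c : ℝ, c ≠ 0 ∧ m 2 = c • lR 2 :=
        ⟨-(m 2 1), neg_ne_zero.mpr hmL1ne,
          vec3_eq_smul (by simp [hL0]) (by simp) (by simp [hmL])⟩
      have g3 : ∃ c : ℝ, c ≠ 0 ∧ m 3 = c • lR 3 :=
        ⟨m 3 1, hn1ne, vec3_eq_smul (by simp [hn0]) (by simp) (by simp [hn12])⟩
      fin_cases j; exacts [g0, g1, g2, g3]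
  · -- realization r0
    left
    have hn2 : m 3 2 = 0 := by
      have h : (q 4 2 - q 4 0) * m 3 2 = 0 := by
        linear_combination hXN - m 3 1 * h41 - q 4 0 * hNsum
      exact (mul_eq_zero.mp h).resolve_left (sub_ne_zero.mpr hcase)
    have hn1ne : m 3 1 ≠ 0 := fun h => hm 3 (vec3_ne (by linarith) h hn2)
    have hy1 : q 5 1 = 0 := by
      have h : q 5 1 * m 3 1 = 0 := by
        linear_combination hYN - m 3 0 * hy0 - q 5 2 * hn2
      exact (mul_eq_zero.mp h).resolve_right hn1ne
    have hy2ne : q 5 2 ≠ 0 := fun h => hq 5 (vec3_ne hy0 hy1 h)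
    have hu0 : q 4 0 = 0 := by
      have h : q 5 2 * q 4 0 = 0 := by linear_combination q 4 2 * hy1 - hYX
      exact (mul_eq_zero.mp h).resolve_left hy2ne
    have h41' : q 4 1 = 0 := by linarith
    have hwne : q 4 2 ≠ 0 := fun h => hq 4 (vec3_ne hu0 h41' h)
    have hL2 : m 2 2 = 0 := by
      have h : q 4 2 * m 2 2 = 0 := by linear_combination hLX - m 2 1 * hu0
      exact (mul_eq_zero.mp h).resolve_left hwne
    have hL1ne : m 2 1 ≠ 0 := fun h => hm 2 (vec3_ne hL0 h hL2)
    constructor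
    · intro i
      have g0 : ∃ c : ℝ, c ≠ 0 ∧ q 0 = c • q0R 0 := ⟨c1, hc1ne, by rw [q0R0, ← pR0]; exact hc1⟩
      have g1 : ∃ c : ℝ, c ≠ 0 ∧ q 1 = c • q0R 1 := ⟨c2, hc2ne, by rw [q0R1, ← pR1]; exact hc2⟩
      have g2 : ∃ c : ℝ, c ≠ 0 ∧ q 2 = c • q0R 2 := ⟨c3, hc3ne, by rw [q0R2, ← pR2]; exact hc3⟩
      have g3 : ∃ c : ℝ, c ≠ 0 ∧ q 3 = c • q0R 3 := ⟨c4, hc4ne, by rw [q0R3, ← pR3]; exact hc4⟩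
      have g4 : ∃ c : ℝ, c ≠ 0 ∧ q 4 = c • q0R 4 :=
        ⟨q 4 2, hwne, vec3_eq_smul (by simp [hu0]) (by simp [h41']) (by simp)⟩
      have g5 : ∃ c : ℝ, c ≠ 0 ∧ q 5 = c • q0R 5 :=
        ⟨q 5 2, hy2ne, vec3_eq_smul (by simp [hy0]) (by simp [hy1]) (by simp)⟩
      fin_cases i; exacts [g0, g1, g2, g3, g4, g5]
    · intro j
      have g0 : ∃ c : ℝ, c ≠ 0 ∧ m 0 = c • m0R 0 :=
        ⟨m 0 0, hA0ne, vec3_eq_smul (by simp) (by simp [hA1]) (by simp [hA2])⟩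
      have g1 : ∃ c : ℝ, c ≠ 0 ∧ m 1 = c • m0R 1 :=
        ⟨-(m 1 0), neg_ne_zero.mpr hC0ne,
          vec3_eq_smul (by simp) (by simp; linarith) (by simp [hC2])⟩
      have g2 : ∃ c : ℝ, c ≠ 0 ∧ m 2 = c • m0R 2 :=
        ⟨-(m 2 1), neg_ne_zero.mpr hL1ne,
          vec3_eq_smul (by simp [hL0]) (by simp) (by simp [hL2])⟩
      have g3 : ∃ c : ℝ, c ≠ 0 ∧ m 3 = c • m0R 3 :=
        ⟨m 3 1, hn1ne, vec3_eq_smul (by simp; linarith) (by simp) (by simp [hn2])⟩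
      fin_cases j; exacts [g0, g1, g2, g3]

lemma rigid1 : PinnedInfRigid IR ({0,1,2,3} : Finset (Fin 6)) pR lR := by
  intro p' l' hflex hpin
  obtain ⟨c1, hc1⟩ := hpin 0 (by decide)
  obtain ⟨c2, hc2⟩ := hpin 1 (by decide)
  obtain ⟨c3, hc3⟩ := hpin 2 (by decide)
  obtain ⟨c4, hc4⟩ := hpin 3 (by decide)
  have h10 : pR 1 ⬝ᵥ l' 0 + p' 1 ⬝ᵥ lR 0 = 0 := hflex (1,0) (by simp [IR])
  have h20 : pR 2 ⬝ᵥ l' 0 + p' 2 ⬝ᵥ lR 0 = 0 := hflex (2,0) (by simp [IR])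
  have h50 : pR 5 ⬝ᵥ l' 0 + p' 5 ⬝ᵥ lR 0 = 0 := hflex (5,0) (by simp [IR])
  have h21 : pR 2 ⬝ᵥ l' 1 + p' 2 ⬝ᵥ lR 1 = 0 := hflex (2,1) (by simp [IR])
  have h31 : pR 3 ⬝ᵥ l' 1 + p' 3 ⬝ᵥ lR 1 = 0 := hflex (3,1) (by simp [IR])
  have h41 : pR 4 ⬝ᵥ l' 1 + p' 4 ⬝ᵥ lR 1 = 0 := hflex (4,1) (by simp [IR])
  have h02 : pR 0 ⬝ᵥ l' 2 + p' 0 ⬝ᵥ lR 2 = 0 := hflex (0,2) (by simp [IR])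
  have h42 : pR 4 ⬝ᵥ l' 2 + p' 4 ⬝ᵥ lR 2 = 0 := hflex (4,2) (by simp [IR])
  have h52 : pR 5 ⬝ᵥ l' 2 + p' 5 ⬝ᵥ lR 2 = 0 := hflex (5,2) (by simp [IR])
  have h33 : pR 3 ⬝ᵥ l' 3 + p' 3 ⬝ᵥ lR 3 = 0 := hflex (3,3) (by simp [IR])
  have h43 : pR 4 ⬝ᵥ l' 3 + p' 4 ⬝ᵥ lR 3 = 0 := hflex (4,3) (by simp [IR])
  have h53 : pR 5 ⬝ᵥ l' 3 + p' 5 ⬝ᵥ lR 3 = 0 := hflex (5,3) (by simp [IR])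
  rw [hc2] at h10; rw [hc3] at h20 h21; rw [hc4] at h31 h33; rw [hc1] at h02
  rw [dp3, dp3] at h10 h20 h50 h21 h31 h41 h02 h42 h52 h33 h43 h53
  simp at h10 h20 h50 h21 h31 h41 h02 h42 h52 h33 h43 h53
  -- derived facts
  have e41 : p' 4 1 = p' 4 0 := by linarith
  have e42 : p' 4 2 = p' 4 1 := by linarith
  have e52 : l' 2 1 + l' 2 2 = 0 := by linarith
  have e51 : p' 5 2 = p' 5 1 := by linarith
  have e53 : l' 3 1 + l' 3 2 = 0 := by linarith
  have e30 : l' 3 0 = 0 := by linarith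
  constructor
  · intro i
    have g0 : ∃ c : ℝ, p' 0 = c • pR 0 := ⟨c1, hc1⟩
    have g1 : ∃ c : ℝ, p' 1 = c • pR 1 := ⟨c2, hc2⟩
    have g2 : ∃ c : ℝ, p' 2 = c • pR 2 := ⟨c3, hc3⟩
    have g3 : ∃ c : ℝ, p' 3 = c • pR 3 := ⟨c4, hc4⟩
    have g4 : ∃ c : ℝ, p' 4 = c • pR 4 :=
      ⟨p' 4 0, vec3_eq_smul (by simp) (by simp [e41]) (by simp [e42, e41])⟩
    have g5 : ∃ c : ℝ, p' 5 = c • pR 5 :=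
      ⟨p' 5 1, vec3_eq_smul (by simp; linarith) (by simp) (by simp [e51])⟩
    fin_cases i; exacts [g0, g1, g2, g3, g4, g5]
  · intro j
    have g0 : ∃ c : ℝ, l' 0 = c • lR 0 :=
      ⟨l' 0 0, vec3_eq_smul (by simp) (by simp [h10]) (by simp [h20])⟩
    have g1 : ∃ c : ℝ, l' 1 = c • lR 1 :=
      ⟨-(l' 1 0), vec3_eq_smul (by simp) (by simp; linarith) (by simp [h21])⟩
    have g2 : ∃ c : ℝ, l' 2 = c • lR 2 :=
      ⟨-(l' 2 1), vec3_eq_smul (by simp [h02]) (by simp) (by simp; linarith)⟩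
    have g3 : ∃ c : ℝ, l' 3 = c • lR 3 :=
      ⟨l' 3 1, vec3_eq_smul (by simp [e30]) (by simp) (by simp; linarith)⟩
    fin_cases j; exacts [g0, g1, g2, g3]

lemma rigid0 : PinnedInfRigid IR ({0,1,2,3} : Finset (Fin 6)) q0R m0R := by
  intro p' l' hflex hpin
  obtain ⟨c1, hc1⟩ := hpin 0 (by decide)
  obtain ⟨c2, hc2⟩ := hpin 1 (by decide)
  obtain ⟨c3, hc3⟩ := hpin 2 (by decide)
  obtain ⟨c4, hc4⟩ := hpin 3 (by decide)
  have h10 : q0R 1 ⬝ᵥ l' 0 + p' 1 ⬝ᵥ m0R 0 = 0 := hflex (1,0) (by simp [IR])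
  have h20 : q0R 2 ⬝ᵥ l' 0 + p' 2 ⬝ᵥ m0R 0 = 0 := hflex (2,0) (by simp [IR])
  have h50 : q0R 5 ⬝ᵥ l' 0 + p' 5 ⬝ᵥ m0R 0 = 0 := hflex (5,0) (by simp [IR])
  have h21 : q0R 2 ⬝ᵥ l' 1 + p' 2 ⬝ᵥ m0R 1 = 0 := hflex (2,1) (by simp [IR])
  have h31 : q0R 3 ⬝ᵥ l' 1 + p' 3 ⬝ᵥ m0R 1 = 0 := hflex (3,1) (by simp [IR])
  have h41 : q0R 4 ⬝ᵥ l' 1 + p' 4 ⬝ᵥ m0R 1 = 0 := hflex (4,1) (by simp [IR])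
  have h02 : q0R 0 ⬝ᵥ l' 2 + p' 0 ⬝ᵥ m0R 2 = 0 := hflex (0,2) (by simp [IR])
  have h42 : q0R 4 ⬝ᵥ l' 2 + p' 4 ⬝ᵥ m0R 2 = 0 := hflex (4,2) (by simp [IR])
  have h52 : q0R 5 ⬝ᵥ l' 2 + p' 5 ⬝ᵥ m0R 2 = 0 := hflex (5,2) (by simp [IR])
  have h33 : q0R 3 ⬝ᵥ l' 3 + p' 3 ⬝ᵥ m0R 3 = 0 := hflex (3,3) (by simp [IR])
  have h43 : q0R 4 ⬝ᵥ l' 3 + p' 4 ⬝ᵥ m0R 3 = 0 := hflex (4,3) (by simp [IR])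
  have h53 : q0R 5 ⬝ᵥ l' 3 + p' 5 ⬝ᵥ m0R 3 = 0 := hflex (5,3) (by simp [IR])
  rw [hc2] at h10; rw [hc3] at h20 h21; rw [hc4] at h31 h33; rw [hc1] at h02
  rw [dp3, dp3] at h10 h20 h50 h21 h31 h41 h02 h42 h52 h33 h43 h53
  simp at h10 h20 h50 h21 h31 h41 h02 h42 h52 h33 h43 h53
  have e41 : p' 4 1 = p' 4 0 := by linarith
  have e32 : l' 3 2 = 0 := by linarith
  have e51 : p' 5 1 = 0 := by linarith
  have e22 : l' 2 2 = 0 := by linarith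
  have e4a : p' 4 1 = 0 := by linarith
  have e4b : p' 4 0 = 0 := by linarith
  constructor
  · intro i
    have g0 : ∃ c : ℝ, p' 0 = c • q0R 0 := ⟨c1, hc1⟩
    have g1 : ∃ c : ℝ, p' 1 = c • q0R 1 := ⟨c2, hc2⟩
    have g2 : ∃ c : ℝ, p' 2 = c • q0R 2 := ⟨c3, hc3⟩
    have g3 : ∃ c : ℝ, p' 3 = c • q0R 3 := ⟨c4, hc4⟩
    have g4 : ∃ c : ℝ, p' 4 = c • q0R 4 :=
      ⟨p' 4 2, vec3_eq_smul (by simp [e4b]) (by simp [e4a]) (by simp)⟩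
    have g5 : ∃ c : ℝ, p' 5 = c • q0R 5 :=
      ⟨p' 5 2, vec3_eq_smul (by simp; linarith) (by simp [e51]) (by simp)⟩
    fin_cases i; exacts [g0, g1, g2, g3, g4, g5]
  · intro j
    have g0 : ∃ c : ℝ, l' 0 = c • m0R 0 :=
      ⟨l' 0 0, vec3_eq_smul (by simp) (by simp [h10]) (by simp [h20])⟩
    have g1 : ∃ c : ℝ, l' 1 = c • m0R 1 :=
      ⟨-(l' 1 0), vec3_eq_smul (by simp) (by simp; linarith) (by simp [h21])⟩
    have g2 : ∃ c : ℝ, l' 2 = c • m0R 2 :=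
      ⟨-(l' 2 1), vec3_eq_smul (by simp [h02]) (by simp) (by simp [e22])⟩
    have g3 : ∃ c : ℝ, l' 3 = c • m0R 3 :=
      ⟨-(l' 3 0), vec3_eq_smul (by simp) (by simp; linarith) (by simp [e32])⟩
    fin_cases j; exacts [g0, g1, g2, g3]

lemma negone : (-1:ℝ) ≠ 0 := by norm_num

lemma li3 (v : Fin 3 → Fin 3 → ℝ) (h : (Matrix.of v).det ≠ 0) : LinearIndependent ℝ v :=
  Matrix.linearIndependent_rows_iff_isUnit.2
    ((Matrix.isUnit_iff_isUnit_det _).2 (isUnit_iff_ne_zero.2 h))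

lemma nonzero_pR : ∀ i, pR i ≠ 0 := by
  intro i h
  fin_cases i <;>
    first
    | exact one_ne_zero (congrFun h 0)
    | exact one_ne_zero (congrFun h 1)
    | exact one_ne_zero (congrFun h 2)

lemma nonzero_lR : ∀ j, lR j ≠ 0 := by
  intro j h
  fin_cases j <;>
    first
    | exact one_ne_zero (congrFun h 0)
    | exact one_ne_zero (congrFun h 1)
    | exact one_ne_zero (congrFun h 2)

lemma nonzero_q0R : ∀ i, q0R i ≠ 0 := by
  intro i h
  fin_cases i <;>
    first
    | exact one_ne_zero (congrFun h 0)
    | exact one_ne_zero (congrFun h 1)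
    | exact one_ne_zero (congrFun h 2)

lemma nonzero_m0R : ∀ j, m0R j ≠ 0 := by
  intro j h
  fin_cases j <;>
    first
    | exact one_ne_zero (congrFun h 0)
    | exact one_ne_zero (congrFun h 1)
    | exact one_ne_zero (congrFun h 2)
    | exact negone (congrFun h 0)
    | exact negone (congrFun h 1)
    | exact negone (congrFun h 2)

lemma hom_pR : IsHomRealization IR pR lR := by
  refine ⟨nonzero_pR, nonzero_lR, ?_⟩
  intro ij hij
  simp only [IR, Set.mem_insert_iff, Set.mem_singleton_iff] at hij
  rcases hij with rfl|rfl|rfl|rfl|rfl|rfl|rfl|rfl|rfl|rfl|rfl|rfl <;>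
    norm_num [dotProduct, Fin.sum_univ_three, Matrix.cons_val_two, Matrix.head_cons, Matrix.tail_cons]

lemma hom_q0R : IsHomRealization IR q0R m0R := by
  refine ⟨nonzero_q0R, nonzero_m0R, ?_⟩
  intro ij hij
  simp only [IR, Set.mem_insert_iff, Set.mem_singleton_iff] at hij
  rcases hij with rfl|rfl|rfl|rfl|rfl|rfl|rfl|rfl|rfl|rfl|rfl|rfl <;>
    norm_num [dotProduct, Fin.sum_univ_three, Matrix.cons_val_two, Matrix.head_cons, Matrix.tail_cons]


/-- there is an incidence structure with a pin set of four points
in general position whose pinned realization space consists of exactly two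
realizations, both infinitesimally rigid as pinned realizations, and not
projectively equivalent to one another. -/
theorem two_isolated_realizations :
    ∃ (np nl : ℕ) (I : Set (Fin np × Fin nl)) (Q : Finset (Fin np))
      (p : Fin np → Fin 3 → ℝ) (l : Fin nl → Fin 3 → ℝ),
      Q.card = 4 ∧
      IsHomRealization I p l ∧
      (∀ f : Fin 3 → {i // i ∈ Q}, Function.Injective f →
        LinearIndependent ℝ (fun r => p (f r).1)) ∧
      ∃ (q0 : Fin np → Fin 3 → ℝ) (m0 : Fin nl → Fin 3 → ℝ)
        (q1 : Fin np → Fin 3 → ℝ) (m1 : Fin nl → Fin 3 → ℝ),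
        IsHomRealization I q0 m0 ∧ PinnedAt Q p q0 ∧
        IsHomRealization I q1 m1 ∧ PinnedAt Q p q1 ∧
        -- (1) exactly two realizations, modulo projective identification
        ¬ SameProjReal q0 m0 q1 m1 ∧
        (∀ (q : Fin np → Fin 3 → ℝ) (m : Fin nl → Fin 3 → ℝ),
          IsHomRealization I q m → PinnedAt Q p q →
          SameProjReal q m q0 m0 ∨ SameProjReal q m q1 m1) ∧
        -- (2) each of the two realizations is infinitesimally rigid when pinned
        PinnedInfRigid I Q q0 m0 ∧ PinnedInfRigid I Q q1 m1 ∧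
        -- (3) the two realizations are not projectively equivalent
        ¬ ∃ A : Matrix (Fin 3) (Fin 3) ℝ, IsUnit A.det ∧
          (∀ i, ∃ c : ℝ, c ≠ 0 ∧ A.mulVec (q0 i) = c • q1 i) ∧
          (∀ j, ∃ c : ℝ, c ≠ 0 ∧ (A⁻¹)ᵀ.mulVec (m0 j) = c • m1 j) := by
  refine ⟨6, 4, IR, {0,1,2,3}, pR, lR, by decide, hom_pR, ?_,
    q0R, m0R, pR, lR, hom_q0R, ?_, hom_pR, ?_, ?_, ?_, rigid0, rigid1, ?_⟩
  · -- general position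
    intro f hf
    have e : (fun r => pR (f r).1) = ![pR (f 0).1, pR (f 1).1, pR (f 2).1] := by
      funext r; fin_cases r <;> rfl
    have ne01 : (f 0).1 ≠ (f 1).1 := fun h => (by decide : (0:Fin 3) ≠ 1) (hf (Subtype.ext h))
    have ne02 : (f 0).1 ≠ (f 2).1 := fun h => (by decide : (0:Fin 3) ≠ 2) (hf (Subtype.ext h))
    have ne12 : (f 1).1 ≠ (f 2).1 := fun h => (by decide : (1:Fin 3) ≠ 2) (hf (Subtype.ext h))
    have h0 := (f 0).2; have h1 := (f 1).2; have h2 := (f 2).2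
    simp only [Finset.mem_insert, Finset.mem_singleton] at h0 h1 h2
    rw [e]
    rcases h0 with h0|h0|h0|h0 <;> rcases h1 with h1|h1|h1|h1 <;>
      rcases h2 with h2|h2|h2|h2 <;>
      first
      | exact absurd (h0.trans h1.symm) ne01
      | exact absurd (h0.trans h2.symm) ne02
      | exact absurd (h1.trans h2.symm) ne12
      | (rw [h0, h1, h2]; apply li3; norm_num [Matrix.det_fin_three, Matrix.vecHead, Matrix.vecTail, Matrix.cons_val_two, Matrix.head_cons, Matrix.tail_cons])
  · -- PinnedAt Q pR q0R
    intro i hi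
    simp only [Finset.mem_insert, Finset.mem_singleton] at hi
    rcases hi with rfl|rfl|rfl|rfl <;>
      exact ⟨1, one_ne_zero, by norm_num⟩
  · -- PinnedAt Q pR pR
    intro i hi
    exact ⟨1, one_ne_zero, (one_smul _ _).symm⟩
  · -- not same
    rintro ⟨h, -⟩
    obtain ⟨c, hc, he⟩ := h 4
    have e0 := congrFun he 0
    have e2 := congrFun he 2
    simp [q0R4, pR4] at e0 e2
    rw [← e0] at e2
    norm_num at e2
  · -- classification
    intro q m hqm hpin
    exact classify q m hqm.1 hqm.2.1 hqm.2.2 hpin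
  · -- not projectively equivalent
    rintro ⟨A, -, hpt, -⟩
    obtain ⟨c, hc, h2⟩ := hpt 2
    obtain ⟨c', hc', h4⟩ := hpt 4
    rw [q0R2] at h2
    rw [q0R4] at h4
    have he : c • pR 2 = c' • pR 4 := h2.symm.trans h4
    have e0 := congrFun he 0
    have e2 := congrFun he 2
    simp [pR2, pR4] at e0 e2
    exact hc' e0.symm
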